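/- For real constants a and b, the integral over ℝ of Φ(a + b·x)·φ(x) dx equals Φ(a/√(1+b²)), where φ and Φ are the PDF and CDF of the standard normal distribution. -/

import Mathlib

open MeasureTheory ProbabilityTheory Real Set

noncomputable def stdPdf (x : ℝ) : ℝ := (Real.sqrt (2 * Real.pi))⁻¹ * Real.exp (-x ^ 2 / 2)

noncomputable def stdCdf (t : ℝ) : ℝ := ∫ x in Set.Iio t, stdPdf x

lemma stdPdf_eq (x : ℝ) : stdPdf x = (Real.sqrt (2 * Real.pi))⁻¹ * Real.exp (-(1/2) * x ^ 2) := by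
  rw [stdPdf]; ring_nf

lemma stdPdf_nonneg (x : ℝ) : 0 ≤ stdPdf x := by
  unfold stdPdf; positivity

lemma stdPdf_cont : Continuous stdPdf := by
  unfold stdPdf; fun_prop

lemma integrable_stdPdf : Integrable stdPdf := by
  simp_rw [funext stdPdf_eq]
  exact (integrable_exp_neg_mul_sq (by norm_num : (0:ℝ) < 1/2)).const_mul _

lemma integral_stdPdf : ∫ x, stdPdf x = 1 := by
  simp_rw [funext stdPdf_eq]
  rw [integral_const_mul, integral_gaussian]
  rw [show (π / (1/2)) = 2 * π by ring]
  rw [inv_mul_cancel₀ (by positivity : Real.sqrt (2*π) ≠ 0)]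

lemma stdPdf_neg (x : ℝ) : stdPdf (-x) = stdPdf x := by simp [stdPdf]

lemma stdPdf_le (x : ℝ) : stdPdf x ≤ (Real.sqrt (2 * Real.pi))⁻¹ := by
  rw [stdPdf]
  exact mul_le_of_le_one_right (by positivity) (Real.exp_le_one_iff.2 (by nlinarith [sq_nonneg x]))

lemma stdCdf_eq_Iic (t : ℝ) : stdCdf t = ∫ x in Iic t, stdPdf x :=
  (integral_Iic_eq_integral_Iio).symm

lemma stdCdf_neg (t : ℝ) : stdCdf (-t) = 1 - stdCdf t := by
  have h1 : stdCdf (-t) = ∫ x in Ioi t, stdPdf x := by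
    rw [stdCdf_eq_Iic, ← integral_comp_neg_Ioi]
    simp_rw [stdPdf_neg]
  have h2 : (∫ x in Iic t, stdPdf x) + ∫ x in Ioi t, stdPdf x = 1 := by
    rw [intervalIntegral.integral_Iic_add_Ioi integrable_stdPdf.integrableOn integrable_stdPdf.integrableOn,
      integral_stdPdf]
  rw [h1, ← stdCdf_eq_Iic] at *
  linarith

lemma stdCdf_zero : stdCdf 0 = 1/2 := by
  have := stdCdf_neg 0
  rw [neg_zero] at this
  linarith

lemma stdCdf_nonneg (t : ℝ) : 0 ≤ stdCdf t :=
  setIntegral_nonneg measurableSet_Iio fun x _ => stdPdf_nonneg x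

lemma stdCdf_le_one (t : ℝ) : stdCdf t ≤ 1 := by
  rw [← integral_stdPdf]
  exact setIntegral_le_integral integrable_stdPdf (Filter.Eventually.of_forall stdPdf_nonneg)

lemma hasDerivAt_stdCdf (t : ℝ) : HasDerivAt stdCdf (stdPdf t) t := by
  have key : ∀ u : ℝ, stdCdf u = stdCdf 0 + ∫ x in (0:ℝ)..u, stdPdf x := by
    intro u
    rw [stdCdf_eq_Iic, stdCdf_eq_Iic,
      ← intervalIntegral.integral_Iic_sub_Iic integrable_stdPdf.integrableOn integrable_stdPdf.integrableOn]
    ring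
  rw [show stdCdf = fun u => stdCdf 0 + ∫ x in (0:ℝ)..u, stdPdf x from funext key]
  exact ((stdPdf_cont.integral_hasStrictDerivAt 0 t).hasDerivAt).const_add _

lemma stdCdf_cont : Continuous stdCdf :=
  continuous_iff_continuousAt.2 fun t => (hasDerivAt_stdCdf t).differentiableAt.continuousAt
lemma integrable_aux (c d : ℝ) : Integrable (fun x => stdCdf (c + d * x) * stdPdf x) := by
  apply integrable_stdPdf.bdd_mul (c := 1)
  · exact (stdCdf_cont.comp (by fun_prop)).aestronglyMeasurable
  · refine Filter.Eventually.of_forall fun x => ?_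
    rw [Real.norm_eq_abs, abs_of_nonneg (stdCdf_nonneg _)]
    exact stdCdf_le_one _

lemma integral_pdf_mul (a b : ℝ) :
    ∫ x, stdPdf (a + b * x) * stdPdf x
      = stdPdf (a / Real.sqrt (1 + b ^ 2)) * (Real.sqrt (1 + b ^ 2))⁻¹ := by
  have hs2 : (0:ℝ) < 1 + b ^ 2 := by positivity
  set s := Real.sqrt (1 + b ^ 2) with hs
  have hs0 : 0 < s := Real.sqrt_pos.2 hs2
  have hss : s ^ 2 = 1 + b ^ 2 := Real.sq_sqrt hs2.le
  set K : ℝ := (Real.sqrt (2 * π))⁻¹ * (Real.sqrt (2 * π))⁻¹ * Real.exp (-(a ^ 2 / (1 + b ^ 2)) / 2) with hK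
  have key : ∀ x : ℝ, stdPdf (a + b * x) * stdPdf x
      = K * Real.exp (-((1 + b ^ 2) / 2) * (x + a * b / (1 + b ^ 2)) ^ 2) := by
    intro x
    have h1 : -(a + b * x) ^ 2 / 2 + -x ^ 2 / 2
        = -(a ^ 2 / (1 + b ^ 2)) / 2 + -((1 + b ^ 2) / 2) * (x + a * b / (1 + b ^ 2)) ^ 2 := by
      field_simp
      ring
    calc stdPdf (a + b * x) * stdPdf x
        = (Real.sqrt (2 * π))⁻¹ * (Real.sqrt (2 * π))⁻¹
            * Real.exp (-(a + b * x) ^ 2 / 2 + -x ^ 2 / 2) := by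
          rw [stdPdf, stdPdf, Real.exp_add]; ring
      _ = _ := by rw [h1, Real.exp_add, hK]; ring
  rw [funext key, integral_const_mul]
  have htr := integral_add_right_eq_self (μ := volume)
    (fun y => Real.exp (-((1 + b ^ 2) / 2) * y ^ 2)) (a * b / (1 + b ^ 2))
  rw [htr, integral_gaussian]
  have hdiv : Real.sqrt (π / ((1 + b ^ 2) / 2)) = Real.sqrt (2 * π) / s := by
    rw [show π / ((1 + b ^ 2) / 2) = (2 * π) / (1 + b ^ 2) by rw [div_div_eq_mul_div]; ring,
      Real.sqrt_div (by positivity) _]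
  have hexp : (a / s) ^ 2 = a ^ 2 / (1 + b ^ 2) := by
    rw [div_pow, hss]
  rw [hdiv, hK, stdPdf, hexp]
  have h2pi : (0:ℝ) < Real.sqrt (2 * π) := by positivity
  field_simp

lemma hasDerivAt_int (b : ℝ) (a₀ : ℝ) :
    HasDerivAt (fun a => ∫ x, stdCdf (a + b * x) * stdPdf x)
      (∫ x, stdPdf (a₀ + b * x) * stdPdf x) a₀ := by
  have key := hasDerivAt_integral_of_dominated_loc_of_deriv_le (μ := volume) (x₀ := a₀)
    (F := fun a x => stdCdf (a + b * x) * stdPdf x)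
    (F' := fun a x => stdPdf (a + b * x) * stdPdf x)
    (bound := fun x => (Real.sqrt (2 * π))⁻¹ * stdPdf x) (s := univ)
    Filter.univ_mem
    (Filter.Eventually.of_forall fun a => (integrable_aux a b).aestronglyMeasurable)
    (integrable_aux a₀ b)
    (((stdPdf_cont.comp (by fun_prop)).mul stdPdf_cont).aestronglyMeasurable)
    (Filter.Eventually.of_forall fun x a _ => ?_)
    (integrable_stdPdf.const_mul _)
    (Filter.Eventually.of_forall fun x a _ => ?_)
  · exact key.2
  · rw [Real.norm_eq_abs, abs_of_nonneg (mul_nonneg (stdPdf_nonneg _) (stdPdf_nonneg _))]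
    exact mul_le_mul_of_nonneg_right (stdPdf_le _) (stdPdf_nonneg _)
  · have h1 : HasDerivAt (fun a => a + b * x) 1 a := (hasDerivAt_id a).add_const (b * x)
    have h2 := (hasDerivAt_stdCdf (a + b * x)).comp a h1
    simpa using h2.mul_const (stdPdf x)

lemma int_zero (b : ℝ) : ∫ x, stdCdf (b * x) * stdPdf x = 1 / 2 := by
  set I := ∫ x, stdCdf (b * x) * stdPdf x with hI
  have hneg := integral_neg_eq_self (fun x => stdCdf (b * x) * stdPdf x) volume
  have heq : ∀ x : ℝ, stdCdf (b * -x) * stdPdf (-x) = (1 - stdCdf (b * x)) * stdPdf x := by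
    intro x
    rw [stdPdf_neg, show b * -x = -(b * x) by ring, stdCdf_neg]
  rw [funext heq] at hneg
  have hsub : ∫ x, (1 - stdCdf (b * x)) * stdPdf x = (∫ x, stdPdf x) - I := by
    simp_rw [sub_mul, one_mul]
    have h0 : Integrable (fun x => stdCdf (b * x) * stdPdf x) := by
      simpa using integrable_aux 0 b
    rw [integral_sub integrable_stdPdf h0]
  rw [hsub, integral_stdPdf] at hneg
  linarith

theorem stmt0 (a b : ℝ) :
    ∫ x : ℝ, stdCdf (a + b * x) * stdPdf x = stdCdf (a / Real.sqrt (1 + b ^ 2)) := by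
  have hs2 : (0:ℝ) < 1 + b ^ 2 := by positivity
  set s := Real.sqrt (1 + b ^ 2) with hs
  have hs0 : 0 < s := Real.sqrt_pos.2 hs2
  set f : ℝ → ℝ := fun a => (∫ x, stdCdf (a + b * x) * stdPdf x) - stdCdf (a / s) with hf
  have hderiv : ∀ y : ℝ, HasDerivAt f 0 y := by
    intro y
    have h1 := hasDerivAt_int b y
    have h2 : HasDerivAt (fun a : ℝ => stdCdf (a / s)) (stdPdf (y / s) * s⁻¹) y := by
      have := (hasDerivAt_stdCdf (y / s)).comp y ((hasDerivAt_id y).div_const s)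
      simpa [div_eq_mul_inv, Function.comp_def] using this
    have := h1.sub h2
    rwa [integral_pdf_mul, sub_self] at this
  have hconst : f a = f 0 :=
    is_const_of_deriv_eq_zero (fun y => (hderiv y).differentiableAt)
      (fun y => (hderiv y).deriv) a 0
  have h0 : f 0 = 0 := by
    rw [hf]
    simp only [zero_add, zero_div]
    rw [int_zero, stdCdf_zero]
    ring
  have : f a = 0 := hconst.trans h0
  rw [hf] at this
  linarith
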